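/- Let d be a positive integer, c > 0 and L > 0 real numbers, α a real number with -d < α < d, and Λ a full-rank ℤ-lattice in ℝ^{2d}. For any real r ≥ 1, the series ∑_{n ∈ ℤ \ {0}} ∑_{j=0}^∞ |n|^d · L · C(j+d-1, d-1) · (2c/(π|n|(d + 2j - α·sgn(n))))^r + ∑_{ξ ∈ Λ \ {0}} (2/π)^r · 1/‖ξ‖^{2r} converges if and only if r > d + 1. (This says that the Schatten r-norm of the Green operator G_α on a compact Heisenberg manifold is finite if and only if r > d + 1.) -/

import Mathlib

open Real

lemma mySumElim_summable_iff {ι κ : Type*} {f : ι → ℝ} {g : κ → ℝ} :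
    Summable (Sum.elim f g) ↔ Summable f ∧ Summable g := by
  constructor
  · intro h
    exact ⟨h.comp_injective Sum.inl_injective, h.comp_injective Sum.inr_injective⟩
  · rintro ⟨hf, hg⟩
    have h1 : Summable (Sum.elim f (0 : κ → ℝ)) := by
      refine (Function.Injective.summable_iff Sum.inl_injective ?_).mp hf
      rintro (x | x) hx
      · exact absurd ⟨x, rfl⟩ hx
      · rfl
    have h2 : Summable (Sum.elim (0 : ι → ℝ) g) := by
      refine (Function.Injective.summable_iff Sum.inr_injective ?_).mp hg
      rintro (x | x) hx
      · rfl
      · exact absurd ⟨x, rfl⟩ hx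
    exact (h1.add h2).congr (by rintro (x | x) <;> simp)

lemma mySummable_pi_prod (g : ℤ → ℝ) (hg0 : ∀ t, 0 ≤ g t) (hg : Summable g) :
    ∀ n : ℕ, Summable (fun m : Fin n → ℤ => ∏ i, g (m i)) := by
  intro n
  induction n with
  | zero => exact summable_of_finite_support (Set.toFinite _)
  | succ n ih =>
    have h := hg.mul_of_nonneg ih hg0 (fun m => Finset.prod_nonneg fun i _ => hg0 _)
    refine ((Fin.consEquiv (fun _ : Fin (n+1) => ℤ)).summable_iff
      (f := fun m : Fin (n+1) → ℤ => ∏ i, g (m i))).1 (h.congr fun p => ?_)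
    simp [Fin.prod_univ_succ]

lemma mySummable_one_add_abs (s : ℝ) (hs : 1 < s) :
    Summable (fun t : ℤ => (1 + |(t : ℝ)|) ^ (-s)) := by
  have hnat : Summable (fun n : ℕ => (1 + (n : ℝ)) ^ (-s)) := by
    have h := Real.summable_nat_rpow.2 (by linarith : -s < -1)
    have := (summable_nat_add_iff 1).2 h
    refine this.congr fun n => ?_
    push_cast
    ring_nf
  apply Summable.of_nat_of_neg
  · exact hnat.congr fun n => by simp
  · exact hnat.congr fun n => by simp

set_option maxHeartbeats 1000000 in
lemma myLattice_summable (d : ℕ) (hd : 0 < d)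
    (Λ : AddSubgroup (EuclideanSpace ℝ (Fin (2 * d))))
    (hdisc : DiscreteTopology Λ)
    (hspan : Submodule.span ℝ (Λ : Set (EuclideanSpace ℝ (Fin (2 * d)))) = ⊤)
    (s : ℝ) (hs : 2 * d < s) :
    Summable (fun ξ : {x : Λ // x ≠ 0} =>
      1 / ‖((ξ : Λ) : EuclideanSpace ℝ (Fin (2 * d)))‖ ^ s) := by
  classical
  set E := EuclideanSpace ℝ (Fin (2 * d))
  set Lsub : Submodule ℤ E := AddSubgroup.toIntSubmodule Λ with hLsub
  haveI : DiscreteTopology Lsub := hdisc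
  haveI : IsZLattice ℝ Lsub := ⟨by rwa [AddSubgroup.coe_toIntSubmodule]⟩
  haveI : Module.Free ℤ Lsub := ZLattice.module_free ℝ Lsub
  haveI : Module.Finite ℤ Lsub := ZLattice.module_finite ℝ Lsub
  have hcard : Fintype.card (Module.Free.ChooseBasisIndex ℤ Lsub) = 2 * d := by
    rw [← Module.finrank_eq_card_chooseBasisIndex, ZLattice.rank ℝ Lsub]
    simp [E, finrank_euclideanSpace_fin]
  set b : Module.Basis (Fin (2 * d)) ℤ Lsub :=
    (Module.Free.chooseBasis ℤ Lsub).reindex (Fintype.equivFinOfCardEq hcard) with hb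
  set B : Module.Basis (Fin (2 * d)) ℝ E := Module.Basis.ofZLatticeBasis ℝ Lsub b with hB
  set T : E →L[ℝ] (Fin (2 * d) → ℝ) :=
    LinearMap.toContinuousLinearMap B.equivFun.toLinearMap with hT
  set C : ℝ := max ‖T‖ 1 with hC
  have hC1 : (1 : ℝ) ≤ C := le_max_right _ _
  have hC0 : (0 : ℝ) < C := lt_of_lt_of_le one_pos hC1
  -- the coordinate map
  set toL : Λ → Lsub := fun ξ => ⟨(ξ : E), ξ.2⟩ with htoL
  set φ : {x : Λ // x ≠ 0} → (Fin (2 * d) → ℤ) :=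
    fun ξ => fun i => b.repr (toL ξ.1) i with hφ
  have hφinj : Function.Injective φ := by
    intro ξ ζ h
    have : b.repr (toL ξ.1) = b.repr (toL ζ.1) := by
      ext i; exact congrFun h i
    have h2 : toL ξ.1 = toL ζ.1 := b.repr.injective this
    have h3 : (ξ.1 : E) = (ζ.1 : E) := congrArg Subtype.val h2
    exact Subtype.ext (Subtype.ext h3)
  -- key : T (ξ : E) = coords
  have hTcoord : ∀ ξ : {x : Λ // x ≠ 0}, (fun i => ((φ ξ i : ℝ))) = T ((ξ : Λ) : E) := by
    intro ξ
    funext i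
    have : T ((ξ : Λ) : E) i = B.repr ((ξ : Λ) : E) i := by
      simp [hT, Module.Basis.equivFun_apply]
    rw [this]
    exact (Module.Basis.ofZLatticeBasis_repr_apply ℝ Lsub b (toL ξ.1) i).symm
  have hd0 : (0:ℝ) < 2 * d := by positivity
  have hs0 : (0:ℝ) ≤ s := le_of_lt (lt_of_le_of_lt (by positivity) hs)
  set t : ℝ := s / (2 * d) with ht
  have ht1 : 1 < t := (one_lt_div hd0).2 hs
  have ht0 : 0 ≤ t := le_of_lt (lt_trans one_pos ht1)
  set g : ℤ → ℝ := fun u => (1 + |(u : ℝ)|) ^ (-t) with hg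
  have key : ∀ ξ : {x : Λ // x ≠ 0},
      1 / ‖((ξ : Λ) : E)‖ ^ s ≤ (C ^ s * 2 ^ s) * ∏ i, g (φ ξ i) := by
    intro ξ
    set x : E := ((ξ : Λ) : E) with hx
    have hx0 : x ≠ 0 := by
      simp only [hx, ne_eq, ZeroMemClass.coe_eq_zero]
      exact ξ.2
    have hxpos : 0 < ‖x‖ := norm_pos_iff.2 hx0
    set v : Fin (2 * d) → ℝ := fun i => ((φ ξ i : ℤ) : ℝ) with hv
    set M : ℝ := ‖v‖ with hM
    have hm0 : φ ξ ≠ 0 := by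
      intro h
      apply hx0
      rw [hx, ZeroMemClass.coe_eq_zero]
      have : b.repr (toL ξ.1) = 0 := by
        ext i
        have := congrFun h i
        simpa using this
      have h2 : toL ξ.1 = 0 := by
        have := b.repr.map_eq_zero_iff.1 this
        exact this
      have := congrArg Subtype.val h2
      exact Subtype.ext (by exact this)
    have hM1 : (1:ℝ) ≤ M := by
      obtain ⟨i, hi⟩ : ∃ i, φ ξ i ≠ 0 := by
        by_contra hcon
        push_neg at hcon
        exact hm0 (funext hcon)
      have h1 : (1:ℝ) ≤ |v i| := by
        have := Int.one_le_abs hi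
        calc (1:ℝ) ≤ (|φ ξ i| : ℤ) := by exact_mod_cast this
        _ = |v i| := by simp [hv]
      calc (1:ℝ) ≤ |v i| := h1
      _ = ‖v i‖ := (Real.norm_eq_abs _).symm
      _ ≤ M := norm_le_pi_norm v i
    have hM0 : (0:ℝ) < M := lt_of_lt_of_le one_pos hM1
    have hMC : M ≤ C * ‖x‖ := by
      have hveq : v = T x := hTcoord ξ
      calc M = ‖T x‖ := by rw [hM, hveq]
      _ ≤ ‖T‖ * ‖x‖ := T.le_opNorm x
      _ ≤ C * ‖x‖ := mul_le_mul_of_nonneg_right (le_max_left _ _) (norm_nonneg _)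
    set P : ℝ := ∏ i, (1 + |((φ ξ i : ℤ) : ℝ)|) with hP
    have hP0 : (0:ℝ) < P := by
      rw [hP]
      apply Finset.prod_pos
      intro i _
      have := abs_nonneg ((φ ξ i : ℤ) : ℝ)
      linarith
    have hPd : P ≤ (2 * M) ^ (2 * d) := by
      have step : P ≤ ∏ _i : Fin (2 * d), (2 * M) := by
        rw [hP]
        apply Finset.prod_le_prod
        · intro i _; positivity
        · intro i _
          have h1 : |v i| ≤ M := by
            calc |v i| = ‖v i‖ := (Real.norm_eq_abs _).symm
            _ ≤ M := norm_le_pi_norm v i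
          have h2 : |((φ ξ i : ℤ) : ℝ)| = |v i| := by simp [hv]
          rw [h2]
          linarith
      calc P ≤ ∏ _i : Fin (2 * d), (2 * M) := step
      _ = (2 * M) ^ (2 * d) := by
          rw [Finset.prod_const, Finset.card_univ, Fintype.card_fin]
    have A1 : M ^ s ≤ C ^ s * ‖x‖ ^ s := by
      calc M ^ s ≤ (C * ‖x‖) ^ s := Real.rpow_le_rpow hM0.le hMC hs0
      _ = C ^ s * ‖x‖ ^ s := Real.mul_rpow hC0.le (norm_nonneg _)
    have A2 : P ^ t ≤ 2 ^ s * M ^ s := by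
      have h2M : (0:ℝ) ≤ 2 * M := by linarith
      calc P ^ t ≤ ((2 * M) ^ (2 * d)) ^ t := Real.rpow_le_rpow hP0.le hPd ht0
      _ = ((2 * M) ^ ((2 * d : ℕ) : ℝ)) ^ t := by rw [Real.rpow_natCast]
      _ = (2 * M) ^ (((2 * d : ℕ) : ℝ) * t) := (Real.rpow_mul h2M _ _).symm
      _ = (2 * M) ^ s := by
          congr 1
          have : ((2 * d : ℕ) : ℝ) = 2 * d := by push_cast; ring
          rw [this, ht]
          field_simp
      _ = 2 ^ s * M ^ s := Real.mul_rpow (by norm_num) hM0.le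
    have hPt0 : (0:ℝ) < P ^ t := Real.rpow_pos_of_pos hP0 _
    have hxs0 : (0:ℝ) < ‖x‖ ^ s := Real.rpow_pos_of_pos hxpos _
    have hprod : ∏ i, g (φ ξ i) = P ^ (-t) := by
      rw [hg, hP]
      rw [← Real.finset_prod_rpow _ _ (fun i _ => by positivity) (-t)]
    rw [hprod, Real.rpow_neg hP0.le, mul_assoc, ← div_eq_mul_inv, mul_div_assoc']
    rw [div_le_div_iff₀ hxs0 hPt0]
    have h2s : (0:ℝ) ≤ 2 ^ s := Real.rpow_nonneg (by norm_num) _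
    calc 1 * P ^ t = P ^ t := one_mul _
    _ ≤ 2 ^ s * M ^ s := A2
    _ ≤ 2 ^ s * (C ^ s * ‖x‖ ^ s) := mul_le_mul_of_nonneg_left A1 h2s
    _ = C ^ s * 2 ^ s * ‖x‖ ^ s := by ring
  have hgsum : Summable g := mySummable_one_add_abs t ht1
  have h1 : Summable (fun m : Fin (2 * d) → ℤ => (C ^ s * 2 ^ s) * ∏ i, g (m i)) :=
    (mySummable_pi_prod g (fun u => Real.rpow_nonneg (by positivity) _) hgsum (2 * d)).mul_left _
  have h2 := h1.comp_injective hφinj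
  exact Summable.of_nonneg_of_le (fun ξ => by positivity) key h2

set_option maxHeartbeats 1000000 in
/-- Schatten norm characterization for the Green operator `G_α`, `-d < α < d`:
the series of `r`-th powers of the reciprocals of the nonzero eigenvalues of `L_α`,
counted with multiplicity, converges iff `r > d + 1`. -/
theorem schatten_green_summable_iff (d : ℕ) (hd : 0 < d) (c L : ℝ) (hc : 0 < c) (hL : 0 < L)
    (α : ℝ) (hα : -(d : ℝ) < α) (hα' : α < d)
    (Λ : AddSubgroup (EuclideanSpace ℝ (Fin (2 * d))))
    (hdisc : DiscreteTopology Λ)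
    (hspan : Submodule.span ℝ (Λ : Set (EuclideanSpace ℝ (Fin (2 * d)))) = ⊤)
    (r : ℝ) (hr : 1 ≤ r) :
    Summable (Sum.elim
      (fun p : {n : ℤ // n ≠ 0} × ℕ =>
        |((p.1 : ℤ) : ℝ)| ^ d * L * ((p.2 + d - 1).choose (d - 1) : ℝ) *
          (2 * c / (π * |((p.1 : ℤ) : ℝ)| *
            ((d : ℝ) + 2 * p.2 - α * ((p.1 : ℤ).sign : ℝ)))) ^ r)
      (fun ξ : {x : Λ // x ≠ 0} =>
        (2 / π) ^ r * (1 / ‖((ξ : Λ) : EuclideanSpace ℝ (Fin (2 * d)))‖ ^ (2 * r)))) ↔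
      r > d + 1 := by
  have hπ : (0:ℝ) < π := Real.pi_pos
  have hdr : (0:ℝ) < d := by exact_mod_cast hd
  have hdα : 0 < (d:ℝ) - α := by linarith
  have habs1 : ∀ n : {n : ℤ // n ≠ 0}, (1:ℝ) ≤ |((n : ℤ) : ℝ)| := by
    intro n
    have := Int.one_le_abs n.2
    calc (1:ℝ) ≤ ((|(n:ℤ)| : ℤ) : ℝ) := by exact_mod_cast this
    _ = |((n:ℤ):ℝ)| := by push_cast; rfl
  have hsgn : ∀ n : {n : ℤ // n ≠ 0}, α * (((n:ℤ).sign : ℤ) : ℝ) ≤ |α| := by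
    intro n
    rcases lt_or_gt_of_ne n.2 with h | h
    · rw [Int.sign_eq_neg_one_of_neg h]
      push_cast
      calc α * (-1) = -α := by ring
      _ ≤ |α| := neg_le_abs α
    · rw [Int.sign_eq_one_of_pos h]
      push_cast
      simpa using le_abs_self α
  have hαd : |α| < d := abs_lt.2 ⟨by linarith, hα'⟩
  have hDpos : ∀ (n : {n : ℤ // n ≠ 0}) (j : ℕ),
      0 < (d : ℝ) + 2 * j - α * (((n:ℤ).sign : ℤ) : ℝ) := by
    intro n j
    have h1 := hsgn n
    have h2 : (0:ℝ) ≤ (j : ℝ) := Nat.cast_nonneg _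
    nlinarith [abs_nonneg α]
  constructor
  · -- forward direction
    intro h
    have hF := h.comp_injective Sum.inl_injective
    have hψinj : Function.Injective (fun m : ℕ => ((⟨(m : ℤ) + 1, by omega⟩ : {n : ℤ // n ≠ 0}),
        (0 : ℕ))) := by
      intro a b hab
      have := congrArg (fun q : {n : ℤ // n ≠ 0} × ℕ => (q.1 : ℤ)) hab
      simpa using this
    have hsub := hF.comp_injective hψinj
    set X : ℝ := 2 * c / (π * ((d:ℝ) - α)) with hX
    have hX0 : 0 < X := by positivity
    have hXr0 : 0 < L * X ^ r := by positivity
    have hsum2 : Summable (fun m : ℕ => ((m : ℝ) + 1) ^ ((d:ℝ) - r)) := by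
      refine ((hsub.mul_left ((L * X ^ r)⁻¹)).congr fun m => ?_)
      have hm1 : (0:ℝ) < (m : ℝ) + 1 := by positivity
      simp only [Function.comp_apply, Sum.elim_inl]
      have e1 : |(((m:ℤ) + 1 : ℤ) : ℝ)| = (m:ℝ) + 1 := by
        rw [abs_of_pos (by exact_mod_cast hm1)]
        push_cast; ring
      have e2 : (((m:ℤ) + 1 : ℤ).sign : ℝ) = 1 := by
        rw [Int.sign_eq_one_of_pos (by positivity)]; norm_num
      have e3 : ((0 + d - 1).choose (d - 1) : ℝ) = 1 := by
        rw [Nat.zero_add, Nat.choose_self]; norm_num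
      rw [e1, e2, e3]
      have e4 : 2 * c / (π * ((m:ℝ) + 1) * ((d:ℝ) + 2 * ((0:ℕ):ℝ) - α * 1)) = X / ((m:ℝ) + 1) := by
        rw [hX]; push_cast; rw [div_div]; congr 1; ring
      rw [e4, Real.div_rpow hX0.le hm1.le]
      rw [show ((m:ℝ)+1) ^ d = ((m:ℝ)+1) ^ ((d:ℕ):ℝ) from (Real.rpow_natCast _ d).symm]
      rw [eq_comm, Real.rpow_sub hm1]
      field_simp
    have hsum3 : Summable (fun m : ℕ => ((m : ℕ) : ℝ) ^ ((d:ℝ) - r)) := by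
      refine (summable_nat_add_iff 1).1 (hsum2.congr fun m => ?_)
      push_cast; ring_nf
    have := Real.summable_nat_rpow.1 hsum3
    linarith
  · -- backward direction
    intro hgt
    rw [mySumElim_summable_iff]
    refine ⟨?_, ?_⟩
    · -- Heisenberg part
      set ε : ℝ := min ((d:ℝ) - |α|) 1 with hε
      have hε0 : 0 < ε := lt_min (by linarith) one_pos
      have hε1 : ε ≤ 1 := min_le_right _ _
      have hεα : ε ≤ (d:ℝ) - |α| := min_le_left _ _
      set X : ℝ := 2 * c / (π * ε) with hX
      have hX0 : 0 < X := by positivity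
      have hr0 : (0:ℝ) ≤ r := by linarith
      have hfsum : Summable (fun n : {n : ℤ // n ≠ 0} => |((n : ℤ) : ℝ)| ^ ((d:ℝ) - r)) := by
        have h1 : (1:ℝ) < r - d := by linarith
        have h2 := summable_abs_int_rpow h1
        refine (h2.comp_injective Subtype.val_injective).congr fun n => ?_
        simp only [Function.comp_apply, neg_sub]
      have hgsum : Summable (fun j : ℕ => ((j : ℝ) + 1) ^ ((d:ℝ) - 1 - r)) := by
        have h1 : (d:ℝ) - 1 - r < -1 := by linarith
        have h2 := Real.summable_nat_rpow.2 h1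
        refine ((summable_nat_add_iff 1).2 h2).congr fun m => ?_
        push_cast; ring_nf
      have hprod := (hfsum.mul_of_nonneg hgsum
        (fun n => Real.rpow_nonneg (abs_nonneg _) _)
        (fun j => Real.rpow_nonneg (by positivity) _)).mul_left
        (L * (d:ℝ) ^ (d - 1) * X ^ r)
      refine Summable.of_nonneg_of_le (fun p => ?_) (fun p => ?_) hprod
      · have hD := hDpos p.1 p.2
        have hden : (0:ℝ) < π * |((p.1 : ℤ) : ℝ)| *
            ((d : ℝ) + 2 * p.2 - α * ((p.1 : ℤ).sign : ℝ)) :=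
          mul_pos (mul_pos hπ (lt_of_lt_of_le one_pos (habs1 p.1))) hD
        have hbase0 : (0:ℝ) ≤ 2 * c / (π * |((p.1 : ℤ) : ℝ)| *
            ((d : ℝ) + 2 * p.2 - α * ((p.1 : ℤ).sign : ℝ))) :=
          div_nonneg (by linarith) hden.le
        exact mul_nonneg (by positivity) (Real.rpow_nonneg hbase0 r)
      · obtain ⟨n, j⟩ := p
        simp only
        set a : ℝ := |((n : ℤ) : ℝ)| with ha
        set b : ℝ := (j : ℝ) + 1 with hb
        have ha1 : (1:ℝ) ≤ a := habs1 n
        have ha0 : (0:ℝ) < a := lt_of_lt_of_le one_pos ha1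
        have hb0 : (0:ℝ) < b := by positivity
        have hD := hDpos n j
        set D : ℝ := (d : ℝ) + 2 * j - α * ((n : ℤ).sign : ℝ) with hDdef
        have hDlow : ε * b ≤ D := by
          have h1 := hsgn n
          have h2 : (0:ℝ) ≤ (j:ℝ) := Nat.cast_nonneg _
          rw [hDdef, hb]
          nlinarith
        have hden : (0:ℝ) < π * a * D := mul_pos (mul_pos hπ ha0) hD
        have hbase0 : (0:ℝ) ≤ 2 * c / (π * a * D) := div_nonneg (by linarith) hden.le
        have hbase : 2 * c / (π * a * D) ≤ X * (a⁻¹ * b⁻¹) := by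
          have e : X * (a⁻¹ * b⁻¹) = 2 * c / (π * a * (ε * b)) := by
            rw [hX]; field_simp
          rw [e]
          apply div_le_div_of_nonneg_left (by positivity) (by positivity)
          exact mul_le_mul_of_nonneg_left hDlow (le_of_lt (by positivity : (0:ℝ) < π * a))
        have hbase' : (2 * c / (π * a * D)) ^ r ≤ (X * (a⁻¹ * b⁻¹)) ^ r :=
          Real.rpow_le_rpow hbase0 hbase hr0
        have hchoose : ((j + d - 1).choose (d - 1) : ℝ) ≤ (d:ℝ) ^ (d-1) * b ^ (d-1) := by
          have h1 : (j + d - 1).choose (d - 1) ≤ (j + d - 1) ^ (d - 1) :=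
            Nat.choose_le_pow _ _
          have h2 : (j + d - 1) ≤ d * (j + 1) := by
            calc j + d - 1 ≤ j + d := Nat.sub_le _ _
            _ ≤ d * (j + 1) := by nlinarith [hd]
          have h3 : (j + d - 1) ^ (d-1) ≤ (d * (j+1)) ^ (d-1) := Nat.pow_le_pow_left h2 _
          calc ((j + d - 1).choose (d - 1) : ℝ) ≤ (((d * (j+1)) ^ (d-1) : ℕ) : ℝ) := by
                exact_mod_cast le_trans h1 h3
          _ = (d:ℝ) ^ (d-1) * b ^ (d-1) := by push_cast [hb]; rw [mul_pow]
        have hstep : a ^ d * L * ((j + d - 1).choose (d - 1) : ℝ) * (2 * c / (π * a * D)) ^ r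
            ≤ a ^ d * L * ((d:ℝ) ^ (d-1) * b ^ (d-1)) * (X * (a⁻¹ * b⁻¹)) ^ r :=
          mul_le_mul (mul_le_mul_of_nonneg_left hchoose (by positivity)) hbase'
            (Real.rpow_nonneg hbase0 r) (by positivity)
        have heq : a ^ d * L * ((d:ℝ) ^ (d-1) * b ^ (d-1)) * (X * (a⁻¹ * b⁻¹)) ^ r
            = L * (d:ℝ) ^ (d-1) * X ^ r * (a ^ ((d:ℝ) - r) * b ^ ((d:ℝ) - 1 - r)) := by
          rw [Real.mul_rpow hX0.le (by positivity),
            Real.mul_rpow (by positivity) (by positivity)]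
          rw [Real.inv_rpow ha0.le, Real.inv_rpow hb0.le]
          rw [← Real.rpow_neg ha0.le, ← Real.rpow_neg hb0.le]
          rw [show a ^ d = a ^ ((d:ℕ):ℝ) from (Real.rpow_natCast a d).symm]
          rw [show b ^ (d-1) = b ^ (((d-1:ℕ)):ℝ) from (Real.rpow_natCast b (d-1)).symm]
          have e1 : a ^ ((d:ℕ):ℝ) * a ^ (-r) = a ^ ((d:ℝ) - r) := by
            rw [← Real.rpow_add ha0, sub_eq_add_neg]
          have e2 : b ^ (((d-1:ℕ)):ℝ) * b ^ (-r) = b ^ ((d:ℝ) - 1 - r) := by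
            rw [← Real.rpow_add hb0]
            congr 1
            have hc1 : ((d - 1 : ℕ) : ℝ) = (d:ℝ) - 1 := by
              have h1d : (1:ℕ) ≤ d := hd
              push_cast [h1d]; ring
            rw [hc1]; ring
          calc a ^ ((d:ℕ):ℝ) * L * ((d:ℝ) ^ (d-1) * b ^ (((d-1:ℕ)):ℝ)) *
                (X ^ r * (a ^ (-r) * b ^ (-r)))
              = L * (d:ℝ) ^ (d-1) * X ^ r *
                ((a ^ ((d:ℕ):ℝ) * a ^ (-r)) * (b ^ (((d-1:ℕ)):ℝ) * b ^ (-r))) := by ring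
          _ = _ := by rw [e1, e2]
        exact le_trans hstep (le_of_eq heq)
    · -- lattice part
      have h2r : 2 * (d:ℝ) < 2 * r := by linarith
      exact (myLattice_summable d hd Λ hdisc hspan (2 * r) h2r).mul_left _
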